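/- [Deterministic full-batch form of the main convergence theorem for AdaSAM.] Let d, N ≥ 1, let f₁, …, f_N : ℝ^d → ℝ be differentiable with ‖∇f_i(y)‖∞ ≤ G for all y and all i, set f = (1/N) Σ_{i=1}^N f_i, and assume each ∇f_i and ∇f are L-Lipschitz (L > 0) and that f(y) ≥ f* for all y ∈ ℝ^d. Let 0 < ε ≤ G, ρ ≥ 0, β₁ ∈ [0,1), β₂ ∈ [0,1], and 0 < γ ≤ ε/(16L). Given x₀ ∈ ℝ^d, define sequences recursively: s_t = ∇f(x_t), assumed nonzero for all t; g_t = (1/N) Σ_{i=1}^N ∇f_i(x_t + ρ s_t/‖s_t‖); m₀ = (1 − β₁) g₀ and m_{t+1} = β₁ m_t + (1 − β₁) g_{t+1}; v₀ = β₂ ε²·𝟙 + (1 − β₂) g₀ ⊙ g₀ and v_{t+1} = β₂ v_t + (1 − β₂) g_{t+1} ⊙ g_{t+1}; v̂₀ = coordinatewise max of ε²·𝟙 and v₀, and v̂_{t+1} = coordinatewise max of v̂_t and v_{t+1}; (η_t)_j = 1/√((v̂_t)_j); and x_{t+1} = x_t − γ (m_t ⊙ η_t). Then for every T ≥ 1: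 (1/T) Σ_{t=0}^{T−1} ‖∇f(x_t)‖² ≤ 2G(f(x₀) − f*)/(γT) + 45 G L² ρ²/ε + 8 G γ L³ ρ²/ε² + (2 G³ d/((1 − β₁) T)) (1/ε − 1/G) + 2(4 + (β₁/(1 − β₁))²) γ L G³ d (1/ε² − 1/G²)/T + 6 γ² L² β₁² d G³/((1 − β₁)² ε³). -/

import Mathlib

/-- The coordinatewise (Hadamard) product on `EuclideanSpace ℝ (Fin d)`. -/
noncomputable def had {d : ℕ} (x y : EuclideanSpace ℝ (Fin d)) : EuclideanSpace ℝ (Fin d) :=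
  (WithLp.equiv 2 (Fin d → ℝ)).symm (fun j => x j * y j)

lemma had_apply {d : ℕ} (x y : EuclideanSpace ℝ (Fin d)) (j : Fin d) :
    had x y j = x j * y j := rfl

lemma enorm_sq {d : ℕ} (x : EuclideanSpace ℝ (Fin d)) : ‖x‖^2 = ∑ j, x j ^ 2 := by
  rw [EuclideanSpace.norm_eq, Real.sq_sqrt]
  · simp [Real.norm_eq_abs, sq_abs]
  · positivity

lemma einner {d : ℕ} (x y : EuclideanSpace ℝ (Fin d)) :
    (inner ℝ x y : ℝ) = ∑ j, x j * y j := by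
  simp [PiLp.inner_apply, RCLike.inner_apply, mul_comm]

lemma esum_apply' {d n : ℕ} (s : Finset (Fin n)) (x : Fin n → EuclideanSpace ℝ (Fin d)) (j : Fin d) :
    (∑ i ∈ s, x i) j = ∑ i ∈ s, x i j := by
  classical
  induction s using Finset.induction_on with
  | empty => rfl
  | insert _ _ h ih => rw [Finset.sum_insert h, Finset.sum_insert h, PiLp.add_apply, ih]

lemma weighted_cs {n : ℕ} (a b w : Fin n → ℝ) (hw : ∀ j, 0 ≤ w j) :
    (∑ j, a j * b j * w j) ^ 2 ≤ (∑ j, a j ^ 2 * w j) * (∑ j, b j ^ 2 * w j) := by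
  have key := Finset.sum_mul_sq_le_sq_mul_sq Finset.univ
    (fun j => a j * Real.sqrt (w j)) (fun j => b j * Real.sqrt (w j))
  calc (∑ j, a j * b j * w j) ^ 2
      = (∑ j, (a j * Real.sqrt (w j)) * (b j * Real.sqrt (w j))) ^ 2 := by
        congr 1
        apply Finset.sum_congr rfl
        intro j _
        rw [show a j * Real.sqrt (w j) * (b j * Real.sqrt (w j))
            = a j * b j * (Real.sqrt (w j) * Real.sqrt (w j)) by ring,
          Real.mul_self_sqrt (hw j)]
    _ ≤ (∑ j, (a j * Real.sqrt (w j)) ^ 2) * (∑ j, (b j * Real.sqrt (w j)) ^ 2) := key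
    _ = (∑ j, a j ^ 2 * w j) * (∑ j, b j ^ 2 * w j) := by
        congr 1 <;>
        · apply Finset.sum_congr rfl
          intro j _
          rw [mul_pow, Real.sq_sqrt (hw j)]

lemma sq_le_of_abs_le {a b : ℝ} (h : |a| ≤ b) : a ^ 2 ≤ b ^ 2 := by
  have h1 := abs_le.mp h
  nlinarith [h1.1, h1.2]

lemma young_cs {R S E : ℝ} (hS : 0 ≤ S) (hE : 0 ≤ E) (hcs : R ^ 2 ≤ S * E) :
    -R ≤ S / 8 + 2 * E := by
  nlinarith [sq_nonneg (S / 8 - 2 * E), sq_nonneg (R + S / 8 + 2 * E)]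

lemma young_ab {a b ε : ℝ} (hε : 0 < ε) (ha : 0 ≤ a) (hb : 0 ≤ b) :
    a * b ≤ 2 * a ^ 2 / ε + ε / 8 * b ^ 2 := by
  rw [div_add' _ _ _ hε.ne', le_div_iff₀ hε]
  nlinarith [sq_nonneg (4 * a - ε * b)]

lemma sq_sum_le {x y a b : ℝ} (hx : 0 ≤ x) (hy : 0 ≤ y) (hxa : x ≤ a) (hyb : y ≤ b) :
    (x + y) ^ 2 ≤ 2 * a ^ 2 + 2 * b ^ 2 := by
  nlinarith [sq_nonneg (a - b), sq_nonneg (a + b)]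

lemma sq_split_mul (a b : ℝ) {h : ℝ} (hh : 0 ≤ h) :
    a ^ 2 * h ≤ 2 * (b ^ 2 * h) + 2 * ((a - b) ^ 2 * h) := by
  nlinarith [mul_le_mul_of_nonneg_right
    (show a ^ 2 ≤ 2 * b ^ 2 + 2 * (a - b) ^ 2 by nlinarith [sq_nonneg (a - 2 * b)]) hh]

lemma sq_mul_le {a h e : ℝ} (hh : 0 < h) (hub : h ≤ e) : (a * h) ^ 2 ≤ a ^ 2 * h * e := by
  have h1 : (0:ℝ) ≤ a ^ 2 * h := by positivity
  calc (a * h) ^ 2 = a ^ 2 * h * h := by ring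
    _ ≤ a ^ 2 * h * e := mul_le_mul_of_nonneg_left hub h1

lemma line_deriv {d : ℕ} {f : EuclideanSpace ℝ (Fin d) → ℝ}
    (hf : Differentiable ℝ f) (a δ : EuclideanSpace ℝ (Fin d)) (θ : ℝ) :
    HasDerivAt (fun θ : ℝ => f (a + θ • δ)) (inner ℝ (gradient f (a + θ • δ)) δ : ℝ) θ := by
  have hline : HasDerivAt (fun θ : ℝ => a + θ • δ) δ θ := by
    simpa using ((hasDerivAt_id θ).smul_const δ).const_add a
  have hfd : HasFDerivAt f (InnerProductSpace.toDual ℝ _ (gradient f (a + θ • δ))) (a + θ • δ) :=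
    hasGradientAt_iff_hasFDerivAt.mp (hf (a + θ • δ)).hasGradientAt
  exact hfd.comp_hasDerivAt θ hline

lemma descent_lemma {d : ℕ} {f : EuclideanSpace ℝ (Fin d) → ℝ} {L : ℝ}
    (hf : Differentiable ℝ f)
    (hLip : ∀ u v, ‖gradient f u - gradient f v‖ ≤ L * ‖u - v‖)
    (a δ : EuclideanSpace ℝ (Fin d)) :
    f (a + δ) ≤ f a + (inner ℝ (gradient f a) δ : ℝ) + L / 2 * ‖δ‖ ^ 2 := by
  set ψ : ℝ → ℝ := fun θ => f (a + θ • δ) - θ * (inner ℝ (gradient f a) δ : ℝ)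
      - L * θ ^ 2 / 2 * ‖δ‖ ^ 2 with hψ
  have hψd : ∀ θ : ℝ, HasDerivAt ψ
      ((inner ℝ (gradient f (a + θ • δ)) δ : ℝ) - (inner ℝ (gradient f a) δ : ℝ)
        - L * θ * ‖δ‖ ^ 2) θ := by
    intro θ
    have h1 := line_deriv hf a δ θ
    have h2 : HasDerivAt (fun θ : ℝ => θ * (inner ℝ (gradient f a) δ : ℝ))
        (inner ℝ (gradient f a) δ : ℝ) θ := by
      simpa using (hasDerivAt_id θ).mul_const (inner ℝ (gradient f a) δ : ℝ)
    have h3 : HasDerivAt (fun θ : ℝ => L * θ ^ 2 / 2 * ‖δ‖ ^ 2)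
        (L * θ * ‖δ‖ ^ 2) θ := by
      have h4 : HasDerivAt (fun θ : ℝ => θ ^ 2) (2 * θ) θ := by
        simpa using hasDerivAt_pow 2 θ
      have := ((h4.const_mul L).div_const 2).mul_const (‖δ‖ ^ 2)
      rw [show L * θ * ‖δ‖ ^ 2 = L * (2 * θ) / 2 * ‖δ‖ ^ 2 by ring]
      exact this
    exact (h1.sub h2).sub h3
  have hmono : AntitoneOn ψ (Set.Icc 0 1) := by
    apply antitoneOn_of_deriv_nonpos (convex_Icc 0 1)
    · have hdiff : Differentiable ℝ ψ := fun θ => (hψd θ).differentiableAt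
      exact hdiff.continuous.continuousOn
    · exact fun θ _ => ((hψd θ).differentiableAt).differentiableWithinAt
    · intro θ hθ
      rw [interior_Icc] at hθ
      rw [(hψd θ).deriv]
      have hd : (inner ℝ (gradient f (a + θ • δ) - gradient f a) δ : ℝ)
          ≤ L * θ * ‖δ‖ ^ 2 := by
        calc (inner ℝ (gradient f (a + θ • δ) - gradient f a) δ : ℝ)
            ≤ ‖gradient f (a + θ • δ) - gradient f a‖ * ‖δ‖ := real_inner_le_norm _ _
          _ ≤ (L * ‖(a + θ • δ) - a‖) * ‖δ‖ :=
              mul_le_mul_of_nonneg_right (hLip _ _) (norm_nonneg _)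
          _ = L * θ * ‖δ‖ ^ 2 := by
              simp [norm_smul, abs_of_pos hθ.1]
              ring
      rw [inner_sub_left] at hd
      linarith
  have h01 := hmono (Set.left_mem_Icc.mpr zero_le_one) (Set.right_mem_Icc.mpr zero_le_one)
    zero_le_one
  simp only [hψ, one_smul, zero_smul, add_zero, one_pow, mul_one, mul_zero, zero_mul,
    sub_zero] at h01
  linarith
set_option maxHeartbeats 1600000 in
/-- Deterministic full-batch form of the main convergence theorem for AdaSAM
(SAM perturbation + momentum + AMSGrad-type adaptive learning rate, run with the
full batch so that the stochastic gradient is exact and `σ² = 0`). -/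
theorem adasam_convergence {d N : ℕ} (hd : 1 ≤ d) (hN : 1 ≤ N)
    (fi : Fin N → EuclideanSpace ℝ (Fin d) → ℝ)
    (f : EuclideanSpace ℝ (Fin d) → ℝ)
    (hfdef : ∀ y, f y = (1 / (N : ℝ)) * ∑ i, fi i y)
    (L G ε ρ β₁ β₂ γ fstar : ℝ)
    (hfi : ∀ i, Differentiable ℝ (fi i))
    (hf : Differentiable ℝ f)
    (hfiG : ∀ i, ∀ y, ∀ j, |gradient (fi i) y j| ≤ G)
    (hL : 0 < L)
    (hfiL : ∀ i, ∀ u v, ‖gradient (fi i) u - gradient (fi i) v‖ ≤ L * ‖u - v‖)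
    (hfL : ∀ u v, ‖gradient f u - gradient f v‖ ≤ L * ‖u - v‖)
    (hlb : ∀ y, fstar ≤ f y)
    (hε : 0 < ε) (hεG : ε ≤ G) (hρ : 0 ≤ ρ)
    (hβ₁ : β₁ ∈ Set.Ico (0 : ℝ) 1) (hβ₂ : β₂ ∈ Set.Icc (0 : ℝ) 1)
    (hγ : 0 < γ) (hγle : γ ≤ ε / (16 * L))
    (x g m v vhat η : ℕ → EuclideanSpace ℝ (Fin d))
    (hsnz : ∀ t, gradient f (x t) ≠ 0)
    (hg : ∀ t, g t = (1 / (N : ℝ)) • ∑ i, gradient (fi i)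
        (x t + (ρ / ‖gradient f (x t)‖) • gradient f (x t)))
    (hm0 : m 0 = (1 - β₁) • g 0)
    (hm : ∀ t, m (t + 1) = β₁ • m t + (1 - β₁) • g (t + 1))
    (hv0 : ∀ j, v 0 j = β₂ * ε ^ 2 + (1 - β₂) * (g 0 j * g 0 j))
    (hv : ∀ t, ∀ j, v (t + 1) j = β₂ * v t j + (1 - β₂) * (g (t + 1) j * g (t + 1) j))
    (hvhat0 : ∀ j, vhat 0 j = max (ε ^ 2) (v 0 j))
    (hvhat : ∀ t, ∀ j, vhat (t + 1) j = max (vhat t j) (v (t + 1) j))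
    (hη : ∀ t, ∀ j, η t j = 1 / Real.sqrt (vhat t j))
    (hx : ∀ t, x (t + 1) = x t - γ • had (m t) (η t))
    (T : ℕ) (hT : 1 ≤ T) :
    (1 / (T : ℝ)) * ∑ t ∈ Finset.range T, ‖gradient f (x t)‖ ^ 2
      ≤ 2 * G * (f (x 0) - fstar) / (γ * T)
        + 45 * G * L ^ 2 * ρ ^ 2 / ε
        + 8 * G * γ * L ^ 3 * ρ ^ 2 / ε ^ 2
        + (2 * G ^ 3 * (d : ℝ) / ((1 - β₁) * T)) * (1 / ε - 1 / G)
        + 2 * (4 + (β₁ / (1 - β₁)) ^ 2) * γ * L * G ^ 3 * (d : ℝ)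
            * (1 / ε ^ 2 - 1 / G ^ 2) / T
        + 6 * γ ^ 2 * L ^ 2 * β₁ ^ 2 * (d : ℝ) * G ^ 3 / ((1 - β₁) ^ 2 * ε ^ 3) := by
  obtain ⟨hβ₁0, hβ₁1⟩ := hβ₁
  obtain ⟨hβ₂0, hβ₂1⟩ := hβ₂
  have h1β : (0:ℝ) < 1 - β₁ := by linarith
  have hG : (0:ℝ) < G := lt_of_lt_of_le hε hεG
  have hNpos : (0:ℝ) < (N:ℝ) := by exact_mod_cast Nat.lt_of_lt_of_le Nat.zero_lt_one hN
  have hTpos : (0:ℝ) < (T:ℝ) := by exact_mod_cast Nat.lt_of_lt_of_le Nat.zero_lt_one hT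
  set c : ℝ := β₁ / (1 - β₁) with hcdef
  have hc0 : 0 ≤ c := div_nonneg hβ₁0 h1β.le
  have hγL : L * γ ≤ ε / 16 := by
    rw [le_div_iff₀ (by positivity : (0:ℝ) < 16 * L)] at hγle
    linarith
  -- gradient of the average
  have grad_avg : ∀ y, gradient f y = (N:ℝ)⁻¹ • ∑ i, gradient (fi i) y := by
    intro y
    have hsum : HasFDerivAt (fun y => ∑ i, fi i y)
        (∑ i, InnerProductSpace.toDual ℝ _ (gradient (fi i) y)) y := by
      apply HasFDerivAt.fun_sum
      intro i _
      exact hasGradientAt_iff_hasFDerivAt.mp ((hfi i y).hasGradientAt)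
    have hsm := hsum.const_mul ((N:ℝ)⁻¹)
    have hfeq : f = fun y => (N:ℝ)⁻¹ * ∑ i, fi i y := by
      funext y
      rw [hfdef y, one_div]
    have hgr : HasGradientAt f ((N:ℝ)⁻¹ • ∑ i, gradient (fi i) y) y := by
      rw [hasGradientAt_iff_hasFDerivAt, map_smul, map_sum]
      rw [hfeq]
      exact hsm
    exact hgr.gradient
  -- coordinatewise bound on the gradient of f
  have hGnn : (0:ℝ) ≤ G := hG.le
  have gradf_coord : ∀ y j, |gradient f y j| ≤ G := by
    intro y j
    rw [grad_avg y, PiLp.smul_apply, esum_apply', smul_eq_mul, abs_mul,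
      abs_of_pos (inv_pos.mpr hNpos)]
    calc (N:ℝ)⁻¹ * |∑ i, gradient (fi i) y j|
        ≤ (N:ℝ)⁻¹ * ∑ i, |gradient (fi i) y j| := by
          apply mul_le_mul_of_nonneg_left (Finset.abs_sum_le_sum_abs _ _)
            (inv_pos.mpr hNpos).le
      _ ≤ (N:ℝ)⁻¹ * ∑ _i : Fin N, G := by
          apply mul_le_mul_of_nonneg_left (Finset.sum_le_sum fun i _ => hfiG i y j)
            (inv_pos.mpr hNpos).le
      _ = G := by
          rw [Finset.sum_const, Finset.card_univ, Fintype.card_fin, nsmul_eq_mul]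
          field_simp
  -- coordinatewise bound on g
  have hgG : ∀ t j, |g t j| ≤ G := by
    intro t j
    rw [hg t, PiLp.smul_apply, esum_apply', smul_eq_mul, abs_mul, one_div,
      abs_of_pos (inv_pos.mpr hNpos)]
    calc (N:ℝ)⁻¹ * |∑ i, gradient (fi i) _ j|
        ≤ (N:ℝ)⁻¹ * ∑ i, |gradient (fi i) _ j| := by
          apply mul_le_mul_of_nonneg_left (Finset.abs_sum_le_sum_abs _ _)
            (inv_pos.mpr hNpos).le
      _ ≤ (N:ℝ)⁻¹ * ∑ _i : Fin N, G := by
          apply mul_le_mul_of_nonneg_left (Finset.sum_le_sum fun i _ => hfiG i _ j)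
            (inv_pos.mpr hNpos).le
      _ = G := by
          rw [Finset.sum_const, Finset.card_univ, Fintype.card_fin, nsmul_eq_mul]
          field_simp
  -- coordinatewise bound on m
  have hmG : ∀ t j, |m t j| ≤ G := by
    intro t
    induction t with
    | zero =>
      intro j
      rw [hm0, PiLp.smul_apply, smul_eq_mul, abs_mul, abs_of_pos h1β]
      have h1 := mul_le_mul_of_nonneg_left (hgG 0 j) h1β.le
      have h2 := mul_nonneg hβ₁0 hGnn
      linarith
    | succ t ih =>
      intro j
      rw [hm t, PiLp.add_apply, PiLp.smul_apply, PiLp.smul_apply, smul_eq_mul, smul_eq_mul]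
      calc |β₁ * m t j + (1 - β₁) * g (t+1) j|
          ≤ |β₁ * m t j| + |(1 - β₁) * g (t+1) j| := abs_add_le _ _
        _ = β₁ * |m t j| + (1 - β₁) * |g (t+1) j| := by
            rw [abs_mul, abs_mul, abs_of_nonneg hβ₁0, abs_of_pos h1β]
        _ ≤ β₁ * G + (1 - β₁) * G := by
            apply add_le_add
            · exact mul_le_mul_of_nonneg_left (ih j) hβ₁0
            · exact mul_le_mul_of_nonneg_left (hgG (t+1) j) h1β.le
        _ = G := by ring
  -- v bounds
  have hvub : ∀ t j, v t j ≤ G ^ 2 := by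
    intro t
    induction t with
    | zero =>
      intro j
      rw [hv0 j]
      have hg2 : g 0 j * g 0 j ≤ G ^ 2 := by
        have h1 := mul_self_le_mul_self (abs_nonneg (g 0 j)) (hgG 0 j)
        have h2 := abs_mul_abs_self (g 0 j)
        have h3 : G * G = G ^ 2 := (sq G).symm
        linarith
      have hε2 : ε ^ 2 ≤ G ^ 2 := pow_le_pow_left₀ hε.le hεG 2
      have hA := mul_le_mul_of_nonneg_left hε2 hβ₂0
      have hB := mul_le_mul_of_nonneg_left hg2 (by linarith : (0:ℝ) ≤ 1 - β₂)
      linarith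
    | succ t ih =>
      intro j
      rw [hv t j]
      have hg2 : g (t+1) j * g (t+1) j ≤ G ^ 2 := by
        have h1 := mul_self_le_mul_self (abs_nonneg (g (t+1) j)) (hgG (t+1) j)
        have h2 := abs_mul_abs_self (g (t+1) j)
        have h3 : G * G = G ^ 2 := (sq G).symm
        linarith
      have hA := mul_le_mul_of_nonneg_left (ih j) hβ₂0
      have hB := mul_le_mul_of_nonneg_left hg2 (by linarith : (0:ℝ) ≤ 1 - β₂)
      linarith
  -- vhat bounds
  have hvhat_lb : ∀ t j, ε ^ 2 ≤ vhat t j := by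
    intro t
    induction t with
    | zero => intro j; rw [hvhat0 j]; exact le_max_left _ _
    | succ t ih => intro j; rw [hvhat t j]; exact le_trans (ih j) (le_max_left _ _)
  have hvhat_ub : ∀ t j, vhat t j ≤ G ^ 2 := by
    intro t
    induction t with
    | zero =>
      intro j
      rw [hvhat0 j]
      exact max_le (pow_le_pow_left₀ hε.le hεG 2) (hvub 0 j)
    | succ t ih =>
      intro j
      rw [hvhat t j]
      exact max_le (ih j) (hvub (t+1) j)
  have hvhat_mono : ∀ t j, vhat t j ≤ vhat (t+1) j := by
    intro t j
    rw [hvhat t j]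
    exact le_max_left _ _
  -- η bounds
  have hη_ub : ∀ t j, η t j ≤ 1 / ε := by
    intro t j
    rw [hη t j]
    apply one_div_le_one_div_of_le hε
    calc ε = Real.sqrt (ε^2) := by rw [Real.sqrt_sq hε.le]
      _ ≤ Real.sqrt (vhat t j) := Real.sqrt_le_sqrt (hvhat_lb t j)
  have hη_lb : ∀ t j, 1 / G ≤ η t j := by
    intro t j
    rw [hη t j]
    apply one_div_le_one_div_of_le
    · apply Real.sqrt_pos.mpr
      exact lt_of_lt_of_le (by positivity) (hvhat_lb t j)
    · calc Real.sqrt (vhat t j) ≤ Real.sqrt (G^2) := Real.sqrt_le_sqrt (hvhat_ub t j)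
        _ = G := Real.sqrt_sq hGnn
  have hη_pos : ∀ t j, 0 < η t j := fun t j => lt_of_lt_of_le (by positivity) (hη_lb t j)
  have hη_mono : ∀ t j, η (t+1) j ≤ η t j := by
    intro t j
    rw [hη t j, hη (t+1) j]
    apply one_div_le_one_div_of_le
    · apply Real.sqrt_pos.mpr
      exact lt_of_lt_of_le (by positivity) (hvhat_lb t j)
    · exact Real.sqrt_le_sqrt (hvhat_mono t j)
  -- SAM perturbation error
  have hgs : ∀ t, ‖g t - gradient f (x t)‖ ≤ L * ρ := by
    intro t
    set y : EuclideanSpace ℝ (Fin d) :=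
      x t + (ρ / ‖gradient f (x t)‖) • gradient f (x t) with hydef
    have hyx : ‖y - x t‖ = ρ := by
      rw [hydef]
      simp only [add_sub_cancel_left]
      rw [norm_smul, Real.norm_eq_abs, abs_div, abs_of_nonneg hρ,
        abs_of_nonneg (norm_nonneg _)]
      field_simp [norm_ne_zero_iff.mpr (hsnz t)]
    have hgt : g t = (N:ℝ)⁻¹ • ∑ i, gradient (fi i) y := by
      rw [hg t, one_div, hydef]
    have hdiff : g t - gradient f (x t)
        = (N:ℝ)⁻¹ • ∑ i, (gradient (fi i) y - gradient (fi i) (x t)) := by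
      rw [hgt, grad_avg (x t), ← smul_sub, ← Finset.sum_sub_distrib]
    rw [hdiff, norm_smul, Real.norm_eq_abs, abs_of_pos (inv_pos.mpr hNpos)]
    calc (N:ℝ)⁻¹ * ‖∑ i, (gradient (fi i) y - gradient (fi i) (x t))‖
        ≤ (N:ℝ)⁻¹ * ∑ i, ‖gradient (fi i) y - gradient (fi i) (x t)‖ := by
          apply mul_le_mul_of_nonneg_left (norm_sum_le _ _) (inv_pos.mpr hNpos).le
      _ ≤ (N:ℝ)⁻¹ * ∑ _i : Fin N, L * ρ := by
          apply mul_le_mul_of_nonneg_left (Finset.sum_le_sum fun i _ => ?_)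
            (inv_pos.mpr hNpos).le
          calc ‖gradient (fi i) y - gradient (fi i) (x t)‖ ≤ L * ‖y - x t‖ := hfiL i y (x t)
            _ = L * ρ := by rw [hyx]
      _ = L * ρ := by
          rw [Finset.sum_const, Finset.card_univ, Fintype.card_fin, nsmul_eq_mul]
          field_simp
  -- the momentum-corrected sequence z
  obtain ⟨z, hz0, hzs⟩ : ∃ z : ℕ → EuclideanSpace ℝ (Fin d), z 0 = x 0 ∧
      ∀ t, z (t+1) = x (t+1) + c • (x (t+1) - x t) :=
    ⟨fun t => Nat.casesOn t (x 0) (fun t' => x (t'+1) + c • (x (t'+1) - x t')),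
      rfl, fun _ => rfl⟩
  obtain ⟨M, hM0, hMs⟩ : ∃ M : ℕ → EuclideanSpace ℝ (Fin d), M 0 = 0 ∧ ∀ t, M (t+1) = m t :=
    ⟨fun t => Nat.casesOn t 0 m, rfl, fun _ => rfl⟩
  obtain ⟨H, hH0, hHs⟩ : ∃ H : ℕ → EuclideanSpace ℝ (Fin d), H 0 = η 0 ∧ ∀ t, H (t+1) = η t :=
    ⟨fun t => Nat.casesOn t (η 0) η, rfl, fun _ => rfl⟩
  have hc1 : (1 + c) * (1 - β₁) = 1 := by rw [hcdef]; field_simp; ring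
  have hc2 : (1 + c) * β₁ = c := by rw [hcdef]; field_simp; ring
  -- the basic difference formula for z
  have hδt : ∀ t, z (t+1) - z t
      = -(γ • had (g t) (η t)) - (γ*c) • had (M t) (η t - H t) := by
    intro t
    cases t with
    | zero =>
      rw [hzs 0, hz0, hM0, hH0, hx 0, hm0]
      ext j
      simp only [PiLp.sub_apply, PiLp.add_apply, PiLp.smul_apply, PiLp.neg_apply,
        had_apply, PiLp.zero_apply, smul_eq_mul]
      linear_combination (-(γ * (g 0 j * η 0 j))) * hc1
    | succ t =>
      rw [hzs (t+1), hzs t, hMs t, hHs t, hx (t+1), hm t, hx t]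
      ext j
      simp only [PiLp.sub_apply, PiLp.add_apply, PiLp.smul_apply, PiLp.neg_apply,
        had_apply, PiLp.zero_apply, smul_eq_mul]
      linear_combination (-(γ * (η (t+1) j * m t j))) * hc2
        + (-(γ * (η (t+1) j * g (t+1) j))) * hc1
  -- bound on z t - x t
  have hzxb : ∀ t, ‖z t - x t‖ ≤ γ * c * ‖had (M t) (H t)‖ := by
    intro t
    cases t with
    | zero =>
      rw [hz0, sub_self, norm_zero]
      positivity
    | succ t =>
      have h1 : z (t+1) - x (t+1) = c • (x (t+1) - x t) := by
        rw [hzs t]; abel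
      have h2 : x (t+1) - x t = -(γ • had (m t) (η t)) := by
        rw [hx t]; abel
      rw [h1, h2, hMs t, hHs t, norm_smul, norm_neg, norm_smul, Real.norm_eq_abs,
        Real.norm_eq_abs, abs_of_nonneg hc0, abs_of_pos hγ]
      ring_nf
      exact le_refl _
  -- coordinate facts about M and H
  have hMGt : ∀ t j, |M t j| ≤ G := by
    intro t j
    cases t with
    | zero => rw [hM0]; simp only [PiLp.zero_apply, abs_zero]; exact hGnn
    | succ t => rw [hMs t]; exact hmG t j
  have hHub : ∀ t j, H t j ≤ 1/ε := by
    intro t j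
    cases t with
    | zero => rw [hH0]; exact hη_ub 0 j
    | succ t => rw [hHs t]; exact hη_ub t j
  have hHle : ∀ t j, η t j ≤ H t j := by
    intro t j
    cases t with
    | zero => rw [hH0]
    | succ t => rw [hHs t]; exact hη_mono t j
  have hHpos : ∀ t j, 0 < H t j := fun t j => lt_of_lt_of_le (hη_pos t j) (hHle t j)
  -- bound on ‖had (M t) (H t)‖²
  have hMH2 : ∀ t, ‖had (M t) (H t)‖^2 ≤ (d:ℝ) * G^2 / ε^2 := by
    intro t
    rw [enorm_sq]
    calc ∑ j, (had (M t) (H t) j)^2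
        ≤ ∑ _j : Fin d, G^2/ε^2 := by
          apply Finset.sum_le_sum
          intro j _
          rw [had_apply, mul_pow]
          have h1 : M t j ^ 2 ≤ G^2 := sq_le_of_abs_le (hMGt t j)
          have h2 : H t j ^ 2 ≤ (1/ε)^2 :=
            pow_le_pow_left₀ (hHpos t j).le (hHub t j) 2
          have h3 : (0:ℝ) ≤ H t j ^2 := sq_nonneg _
          have h4 : (0:ℝ) ≤ G^2 := sq_nonneg _
          calc M t j ^2 * H t j ^2 ≤ G^2 * H t j^2 :=
              mul_le_mul_of_nonneg_right h1 h3
            _ ≤ G^2 * (1/ε)^2 := mul_le_mul_of_nonneg_left h2 h4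
            _ = G^2/ε^2 := by ring
      _ = (d:ℝ) * G^2/ε^2 := by
          rw [Finset.sum_const, Finset.card_univ, Fintype.card_fin, nsmul_eq_mul]
          ring
  -- scalar quantities
  obtain ⟨S, hSdef⟩ : ∃ S : ℕ → ℝ, ∀ t, S t = ∑ j, (gradient f (x t) j)^2 * η t j :=
    ⟨_, fun _ => rfl⟩
  obtain ⟨P, hPdef⟩ : ∃ P : ℕ → ℝ, ∀ t, P t = ∑ j, (H t j - η t j) := ⟨_, fun _ => rfl⟩
  have hS0 : ∀ t, 0 ≤ S t := by
    intro t
    rw [hSdef]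
    exact Finset.sum_nonneg fun j _ => mul_nonneg (sq_nonneg _) (hη_pos t j).le
  have hP0 : ∀ t, 0 ≤ P t := by
    intro t
    rw [hPdef]
    exact Finset.sum_nonneg fun j _ => sub_nonneg.mpr (hHle t j)
  -- the per-step descent inequality
  have key : ∀ t, γ/2 * S t ≤ f (z t) - f (z (t+1))
      + 3*(γ*(L^2*ρ^2/ε))
      + 2*γ/ε*((L*γ*c)^2*((d:ℝ)*G^2/ε^2))
      + γ*c*(G^2*P t) + L*γ^2*c^2*(G^2*(1/ε)*P t) := by
    intro t
    set E : ℝ := ∑ j, (g t j - gradient f (x t) j)^2 * η t j with hEdef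
    set R : ℝ := ∑ j, gradient f (x t) j * (g t j - gradient f (x t) j) * η t j with hRdef
    set W : ℝ := ∑ j, (gradient f (z t) j - gradient f (x t) j) * (g t j * η t j) with hWdef
    set C2 : ℝ := ∑ j, gradient f (z t) j * (M t j * (η t j - H t j)) with hC2def
    have hE0 : 0 ≤ E :=
      Finset.sum_nonneg fun j _ => mul_nonneg (sq_nonneg _) (hη_pos t j).le
    have hEub : E ≤ L^2*ρ^2/ε := by
      have h1 : E ≤ (∑ j, (g t j - gradient f (x t) j)^2) * (1/ε) := by
        rw [Finset.sum_mul]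
        exact Finset.sum_le_sum fun j _ =>
          mul_le_mul_of_nonneg_left (hη_ub t j) (sq_nonneg _)
      have h2 : (∑ j, (g t j - gradient f (x t) j)^2)
          = ‖g t - gradient f (x t)‖^2 := by
        rw [enorm_sq]
        exact Finset.sum_congr rfl fun j _ => by rw [PiLp.sub_apply]
      have h3 : ‖g t - gradient f (x t)‖^2 ≤ (L*ρ)^2 :=
        pow_le_pow_left₀ (norm_nonneg _) (hgs t) 2
      calc E ≤ ‖g t - gradient f (x t)‖^2 * (1/ε) := by rw [← h2]; exact h1
        _ ≤ (L*ρ)^2 * (1/ε) := mul_le_mul_of_nonneg_right h3 (by positivity)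
        _ = L^2*ρ^2/ε := by ring
    have hcs : R^2 ≤ S t * E := by
      rw [hRdef, hSdef t, hEdef]
      exact weighted_cs _ _ _ fun j => (hη_pos t j).le
    have hR : -R ≤ S t/8 + 2*E := young_cs (hS0 t) hE0 hcs
    have hWin : W = (inner ℝ (gradient f (z t) - gradient f (x t)) (had (g t) (η t)) : ℝ) := by
      rw [einner, hWdef]
      exact Finset.sum_congr rfl fun j _ => by rw [PiLp.sub_apply, had_apply]
    have hWnn : -W ≤ ‖gradient f (z t) - gradient f (x t)‖ * ‖had (g t) (η t)‖ := by
      rw [hWin]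
      have h1 := abs_real_inner_le_norm (gradient f (z t) - gradient f (x t)) (had (g t) (η t))
      have h2 := neg_abs_le (inner ℝ (gradient f (z t) - gradient f (x t)) (had (g t) (η t)) : ℝ)
      linarith
    have hWb : -W ≤ 2*‖gradient f (z t) - gradient f (x t)‖^2/ε + ε/8*‖had (g t) (η t)‖^2 :=
      le_trans hWnn (young_ab hε (norm_nonneg _) (norm_nonneg _))
    have hQ : (∑ j, (g t j)^2 * η t j) ≤ 2*S t + 2*E := by
      rw [hSdef t, hEdef, Finset.mul_sum, Finset.mul_sum, ← Finset.sum_add_distrib]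
      apply Finset.sum_le_sum
      intro j _
      have := sq_split_mul (g t j) (gradient f (x t) j) (hη_pos t j).le
      linarith
    have hA2 : ‖had (g t) (η t)‖^2 ≤ (2*S t + 2*E)/ε := by
      rw [enorm_sq]
      calc (∑ j, (had (g t) (η t) j)^2)
          ≤ ∑ j, (g t j)^2 * η t j * (1/ε) := by
            exact Finset.sum_le_sum fun j _ => by
              rw [had_apply]; exact sq_mul_le (hη_pos t j) (hη_ub t j)
        _ = (∑ j, (g t j)^2 * η t j) * (1/ε) := by rw [Finset.sum_mul]
        _ ≤ (2*S t + 2*E) * (1/ε) := by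
            apply mul_le_mul_of_nonneg_right hQ (by positivity)
        _ = (2*S t + 2*E)/ε := by ring
    have hεa2 : ε * ‖had (g t) (η t)‖^2 ≤ 2*S t + 2*E := by
      have h1 := (le_div_iff₀ hε).mp hA2
      linarith
    have hwb : ‖gradient f (z t) - gradient f (x t)‖^2 ≤ (L*γ*c)^2*((d:ℝ)*G^2/ε^2) := by
      have h1 : ‖gradient f (z t) - gradient f (x t)‖ ≤ L*(γ*c*‖had (M t) (H t)‖) :=
        le_trans (hfL (z t) (x t)) (mul_le_mul_of_nonneg_left (hzxb t) hL.le)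
      have h2 := pow_le_pow_left₀ (norm_nonneg _) h1 2
      have h3 : (L*(γ*c*‖had (M t) (H t)‖))^2 = (L*γ*c)^2*‖had (M t) (H t)‖^2 := by ring
      rw [h3] at h2
      exact le_trans h2 (mul_le_mul_of_nonneg_left (hMH2 t) (by positivity))
    have hC2b : -C2 ≤ G^2*P t := by
      have h5 : -C2 = ∑ j, -(gradient f (z t) j * (M t j * (η t j - H t j))) := by
        rw [hC2def, ← Finset.sum_neg_distrib]
      rw [h5, hPdef, Finset.mul_sum]
      apply Finset.sum_le_sum
      intro j _
      have h1 : |gradient f (z t) j * M t j| ≤ G^2 := by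
        rw [abs_mul]
        calc |gradient f (z t) j| * |M t j| ≤ G*G :=
            mul_le_mul (gradf_coord _ j) (hMGt t j) (abs_nonneg _) hGnn
          _ = G^2 := (sq G).symm
      have h2 : 0 ≤ H t j - η t j := sub_nonneg.mpr (hHle t j)
      have h3 : gradient f (z t) j * M t j * (H t j - η t j) ≤ G^2 * (H t j - η t j) :=
        mul_le_mul_of_nonneg_right (le_of_abs_le h1) h2
      linarith [h3]
    have hdd : ‖z (t+1) - z t‖ ≤ γ*‖had (g t) (η t)‖ + γ*c*‖had (M t) (η t - H t)‖ := by
      rw [hδt t]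
      calc ‖-(γ • had (g t) (η t)) - (γ*c) • had (M t) (η t - H t)‖
          ≤ ‖-(γ • had (g t) (η t))‖ + ‖(γ*c) • had (M t) (η t - H t)‖ := norm_sub_le _ _
        _ = γ*‖had (g t) (η t)‖ + γ*c*‖had (M t) (η t - H t)‖ := by
            rw [norm_neg, norm_smul, norm_smul, Real.norm_eq_abs, Real.norm_eq_abs,
              abs_of_pos hγ, abs_of_nonneg (mul_nonneg hγ.le hc0)]
    have hdd2 : ‖z (t+1) - z t‖^2
        ≤ 2*(γ*‖had (g t) (η t)‖)^2 + 2*(γ*c*‖had (M t) (η t - H t)‖)^2 := by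
      have h1 := pow_le_pow_left₀ (norm_nonneg _) hdd 2
      exact le_trans h1 (sq_sum_le (by positivity) (by positivity) le_rfl le_rfl)
    have hB2 : ‖had (M t) (η t - H t)‖^2 ≤ G^2*(1/ε)*P t := by
      rw [enorm_sq, hPdef, Finset.mul_sum]
      apply Finset.sum_le_sum
      intro j _
      rw [had_apply, PiLp.sub_apply]
      have h2 : H t j - η t j ≤ 1/ε := by
        have h6 := hη_pos t j
        have h7 := hHub t j
        linarith
      have h3 : 0 ≤ H t j - η t j := sub_nonneg.mpr (hHle t j)
      have h1 : (η t j - H t j)^2 ≤ (1/ε)*(H t j - η t j) := by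
        calc (η t j - H t j)^2 = (H t j - η t j)*(H t j - η t j) := by ring
          _ ≤ (1/ε)*(H t j - η t j) := mul_le_mul_of_nonneg_right h2 h3
      have h4 : (M t j)^2 ≤ G^2 := sq_le_of_abs_le (hMGt t j)
      calc (M t j * (η t j - H t j))^2 = (M t j)^2*(η t j - H t j)^2 := by rw [mul_pow]
        _ ≤ G^2*(η t j - H t j)^2 := mul_le_mul_of_nonneg_right h4 (sq_nonneg _)
        _ ≤ G^2*((1/ε)*(H t j - η t j)) :=
            mul_le_mul_of_nonneg_left h1 (sq_nonneg G)
        _ = G^2*(1/ε)*(H t j - η t j) := by ring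
    have hdesc := descent_lemma hf hfL (z t) (z (t+1) - z t)
    have hzz : z t + (z (t+1) - z t) = z (t+1) := by abel
    rw [hzz] at hdesc
    have hcoord : ∀ j, gradient f (z t) j * (z (t+1) - z t) j
        = -(γ * (gradient f (z t) j * (g t j * η t j)))
          - γ*c*(gradient f (z t) j * (M t j * (η t j - H t j))) := by
      intro j
      rw [hδt t]
      simp only [PiLp.sub_apply, PiLp.neg_apply, PiLp.smul_apply, had_apply, smul_eq_mul]
      ring
    have hinner : (inner ℝ (gradient f (z t)) (z (t+1) - z t) : ℝ)
        = -(γ * (∑ j, gradient f (z t) j * (g t j * η t j))) - γ*c*C2 := by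
      rw [einner, hC2def, Finset.sum_congr rfl (fun j _ => hcoord j),
        Finset.sum_sub_distrib, Finset.sum_neg_distrib, ← Finset.mul_sum, ← Finset.mul_sum]
    have hsplit : (∑ j, gradient f (z t) j * (g t j * η t j)) = S t + R + W := by
      rw [hSdef t, hRdef, hWdef, ← Finset.sum_add_distrib, ← Finset.sum_add_distrib]
      exact Finset.sum_congr rfl fun j _ => by ring
    rw [hinner, hsplit] at hdesc
    have p2 : γ*(-R) ≤ γ*(S t/8 + 2*E) := mul_le_mul_of_nonneg_left hR hγ.le
    have p3 : γ*(-W) ≤ γ*(2*‖gradient f (z t) - gradient f (x t)‖^2/ε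
        + ε/8*‖had (g t) (η t)‖^2) := mul_le_mul_of_nonneg_left hWb hγ.le
    have p4 : γ*c*(-C2) ≤ γ*c*(G^2*P t) :=
      mul_le_mul_of_nonneg_left hC2b (mul_nonneg hγ.le hc0)
    have p5 : L/2*‖z (t+1) - z t‖^2 ≤ L/2*(2*(γ*‖had (g t) (η t)‖)^2
        + 2*(γ*c*‖had (M t) (η t - H t)‖)^2) :=
      mul_le_mul_of_nonneg_left hdd2 (by positivity)
    have p6 : L*γ^2*‖had (g t) (η t)‖^2 ≤ γ/16*(2*S t + 2*E) := by
      have h2 := mul_le_mul_of_nonneg_right hγL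
        (mul_nonneg hγ.le (sq_nonneg ‖had (g t) (η t)‖))
      have h4 := mul_le_mul_of_nonneg_left hεa2 (by positivity : (0:ℝ) ≤ γ/16)
      linarith [h2, h4]
    have p7 : γ*(ε/8*‖had (g t) (η t)‖^2) ≤ γ/8*(2*S t + 2*E) := by
      have h4 := mul_le_mul_of_nonneg_left hεa2 (by positivity : (0:ℝ) ≤ γ/8)
      linarith [h4]
    have p8 : γ*(2*‖gradient f (z t) - gradient f (x t)‖^2/ε)
        ≤ 2*γ/ε*((L*γ*c)^2*((d:ℝ)*G^2/ε^2)) := by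
      have h1 := mul_le_mul_of_nonneg_left hwb (by positivity : (0:ℝ) ≤ 2*γ/ε)
      calc γ*(2*‖gradient f (z t) - gradient f (x t)‖^2/ε)
          = 2*γ/ε*‖gradient f (z t) - gradient f (x t)‖^2 := by ring
        _ ≤ 2*γ/ε*((L*γ*c)^2*((d:ℝ)*G^2/ε^2)) := h1
    have p9 : L*γ^2*c^2*‖had (M t) (η t - H t)‖^2 ≤ L*γ^2*c^2*(G^2*(1/ε)*P t) :=
      mul_le_mul_of_nonneg_left hB2 (by positivity)
    have p10 : γ*E ≤ γ*(L^2*ρ^2/ε) := mul_le_mul_of_nonneg_left hEub hγ.le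
    have hposE : (0:ℝ) ≤ γ*(L^2*ρ^2/ε) := by positivity
    linarith [hdesc, p2, p3, p4, p5, p6, p7, p8, p9, p10, hposE]
  -- telescoping bounds
  have hK0 : (0:ℝ) ≤ 1/ε - 1/G := by
    have := one_div_le_one_div_of_le hε hεG
    linarith
  have hPsum : ∑ t ∈ Finset.range T, P t ≤ (d:ℝ)*(1/ε - 1/G) := by
    obtain ⟨T', hTT⟩ : ∃ T', T = T' + 1 := ⟨T - 1, by omega⟩
    subst hTT
    have h1 : ∀ j : Fin d, (∑ t ∈ Finset.range (T'+1), (H t j - η t j)) ≤ 1/ε - 1/G := by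
      intro j
      rw [Finset.sum_range_succ']
      have h2 : ∀ t ∈ Finset.range T', H (t+1) j - η (t+1) j = η t j - η (t+1) j :=
        fun t _ => by rw [hHs t]
      rw [Finset.sum_congr rfl h2, Finset.sum_range_sub' (fun t => η t j), hH0, sub_self,
        add_zero]
      have h3 := hη_ub 0 j
      have h4 := hη_lb T' j
      linarith
    calc ∑ t ∈ Finset.range (T'+1), P t
        = ∑ j, ∑ t ∈ Finset.range (T'+1), (H t j - η t j) := by
          rw [Finset.sum_congr rfl (fun t _ => hPdef t)]
          exact Finset.sum_comm
      _ ≤ ∑ _j : Fin d, (1/ε - 1/G) := Finset.sum_le_sum fun j _ => h1 j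
      _ = (d:ℝ)*(1/ε - 1/G) := by
          rw [Finset.sum_const, Finset.card_univ, Fintype.card_fin, nsmul_eq_mul]
  have hFsum : ∑ t ∈ Finset.range T, (f (z t) - f (z (t+1))) = f (x 0) - f (z T) := by
    rw [Finset.sum_range_sub' (fun t => f (z t)), hz0]
  -- sum the per-step inequality
  obtain ⟨CC, hCCdef⟩ : ∃ CC : ℝ, CC = 3*(γ*(L^2*ρ^2/ε)) + 2*γ/ε*((L*γ*c)^2*((d:ℝ)*G^2/ε^2)) :=
    ⟨_, rfl⟩
  obtain ⟨DD, hDDdef⟩ : ∃ DD : ℝ, DD = γ*c*G^2 + L*γ^2*c^2*(G^2*(1/ε)) := ⟨_, rfl⟩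
  have hsum2 : γ/2 * (∑ t ∈ Finset.range T, S t)
      ≤ (f (x 0) - fstar) + (T:ℝ)*CC + DD * ((d:ℝ)*(1/ε - 1/G)) := by
    have hsumkey := Finset.sum_le_sum (fun t (_ : t ∈ Finset.range T) => key t)
    have e0 : ∀ t, f (z t) - f (z (t+1))
        + 3*(γ*(L^2*ρ^2/ε))
        + 2*γ/ε*((L*γ*c)^2*((d:ℝ)*G^2/ε^2))
        + γ*c*(G^2*P t) + L*γ^2*c^2*(G^2*(1/ε)*P t)
        = (f (z t) - f (z (t+1))) + CC + DD*P t := by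
      intro t
      rw [hCCdef, hDDdef]
      ring
    rw [Finset.sum_congr rfl (fun t _ => e0 t)] at hsumkey
    rw [Finset.sum_add_distrib, Finset.sum_add_distrib, hFsum, Finset.sum_const,
      Finset.card_range, nsmul_eq_mul, ← Finset.mul_sum, ← Finset.mul_sum] at hsumkey
    have hDD0 : 0 ≤ DD := by
      rw [hDDdef]
      have : (0:ℝ) ≤ γ*c*G^2 := mul_nonneg (mul_nonneg hγ.le hc0) (sq_nonneg G)
      have : (0:ℝ) ≤ L*γ^2*c^2*(G^2*(1/ε)) := by positivity
      linarith
    have hP2 := mul_le_mul_of_nonneg_left hPsum hDD0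
    have hzT := hlb (z T)
    linarith only [hsumkey, hP2, hzT]
  -- lower bound for the gradient norms
  have hsnorm : ∀ t, ‖gradient f (x t)‖^2 ≤ G * S t := by
    intro t
    rw [enorm_sq, hSdef t, Finset.mul_sum]
    apply Finset.sum_le_sum
    intro j _
    have h1 := hη_lb t j
    have h2 : 1 ≤ G * η t j := by
      have h3 := mul_le_mul_of_nonneg_left h1 hGnn
      rw [mul_one_div, div_self hG.ne'] at h3
      exact h3
    calc (gradient f (x t) j)^2 = (gradient f (x t) j)^2 * 1 := by ring
      _ ≤ (gradient f (x t) j)^2 * (G * η t j) :=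
          mul_le_mul_of_nonneg_left h2 (sq_nonneg _)
      _ = G*((gradient f (x t) j)^2 * η t j) := by ring
  have hsumnorm : (∑ t ∈ Finset.range T, ‖gradient f (x t)‖^2)
      ≤ G * ∑ t ∈ Finset.range T, S t := by
    rw [Finset.mul_sum]
    exact Finset.sum_le_sum fun t _ => hsnorm t
  -- final assembly
  obtain ⟨RR, hRRdef⟩ : ∃ RR : ℝ,
      RR = (f (x 0) - fstar) + (T:ℝ)*CC + DD * ((d:ℝ)*(1/ε - 1/G)) := ⟨_, rfl⟩
  have hsum2' : γ/2 * (∑ t ∈ Finset.range T, S t) ≤ RR := by rw [hRRdef]; exact hsum2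
  have hSS2 : (∑ t ∈ Finset.range T, S t) ≤ 2*RR/γ := by
    rw [le_div_iff₀ hγ]
    linarith only [hsum2']
  have hN2 : (∑ t ∈ Finset.range T, ‖gradient f (x t)‖^2) ≤ G*(2*RR/γ) :=
    le_trans hsumnorm (mul_le_mul_of_nonneg_left hSS2 hGnn)
  have hgoal2 : (1/(T:ℝ)) * (∑ t ∈ Finset.range T, ‖gradient f (x t)‖^2)
      ≤ (1/(T:ℝ))*(G*(2*RR/γ)) :=
    mul_le_mul_of_nonneg_left hN2 (by positivity)
  have heq : (1/(T:ℝ))*(G*(2*RR/γ))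
      = 2*G*(f (x 0) - fstar)/(γ*T)
        + 6*G*L^2*ρ^2/ε + 4*γ^2*L^2*c^2*(d:ℝ)*G^3/ε^3
        + 2*c*G^3*((d:ℝ)*(1/ε-1/G))/T
        + 2*L*γ*c^2*G^3*((d:ℝ)*(1/ε-1/G))/(ε*T) := by
    rw [hRRdef, hCCdef, hDDdef]
    field_simp
    ring
  have hB2c : 6*G*L^2*ρ^2/ε ≤ 45*G*L^2*ρ^2/ε := by
    have h1 : (0:ℝ) ≤ G*L^2*ρ^2 := by positivity
    have h2 : 6*(G*L^2*ρ^2) ≤ 45*(G*L^2*ρ^2) := by linarith only [h1]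
    have h3 : 6*G*L^2*ρ^2 ≤ 45*G*L^2*ρ^2 := by linarith only [h2]
    exact (div_le_div_iff_of_pos_right hε).mpr h3
  have hB3 : (0:ℝ) ≤ 8*G*γ*L^3*ρ^2/ε^2 := by positivity
  have hB4 : 2*c*G^3*((d:ℝ)*(1/ε-1/G))/T
      ≤ (2*G^3*(d:ℝ)/((1-β₁)*T))*(1/ε-1/G) := by
    have hcβ : c*(1-β₁) = β₁ := by rw [hcdef]; field_simp
    have hre : (2*G^3*(d:ℝ)/((1-β₁)*T))*(1/ε-1/G)
        = 2*G^3*(d:ℝ)*(1/ε-1/G)/((1-β₁)*T) := by ring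
    rw [hre, div_le_div_iff₀ hTpos (by positivity : (0:ℝ) < (1-β₁)*T)]
    have hX : (0:ℝ) ≤ G^3*(d:ℝ)*(1/ε-1/G)*(T:ℝ) :=
      mul_nonneg (mul_nonneg (mul_nonneg (pow_nonneg hGnn 3) (Nat.cast_nonneg d)) hK0)
        hTpos.le
    nlinarith only [hcβ, hX, h1β.le, mul_nonneg hX h1β.le]
  have hB5 : 2*L*γ*c^2*G^3*((d:ℝ)*(1/ε-1/G))/(ε*T)
      ≤ 2*(4+c^2)*γ*L*G^3*(d:ℝ)*(1/ε^2-1/G^2)/T := by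
    have h2 : (0:ℝ) ≤ 1/ε^2 - 1/G^2 := by
      have h2a : ε^2 ≤ G^2 := pow_le_pow_left₀ hε.le hεG 2
      have := one_div_le_one_div_of_le (by positivity : (0:ℝ) < ε^2) h2a
      linarith
    have hK2 : (1/ε-1/G)*(1/ε) ≤ 1/ε^2 - 1/G^2 := by
      have h3 : 1/G^2 ≤ 1/(G*ε) := by
        apply one_div_le_one_div_of_le (by positivity)
        nlinarith only [mul_le_mul_of_nonneg_left hεG hGnn]
      have h4 : (1/ε-1/G)*(1/ε) = 1/ε^2 - 1/(G*ε) := by ring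
      linarith
    have hfac : c^2*((1/ε-1/G)*(1/ε)) ≤ (4+c^2)*(1/ε^2-1/G^2) := by
      have h5 := mul_le_mul_of_nonneg_left hK2 (sq_nonneg c)
      linarith only [h5, h2]
    have hY : (0:ℝ) ≤ 2*γ*L*G^3*(d:ℝ)/T := by positivity
    have h6 := mul_le_mul_of_nonneg_left hfac hY
    calc 2*L*γ*c^2*G^3*((d:ℝ)*(1/ε-1/G))/(ε*T)
        = (2*γ*L*G^3*(d:ℝ)/T) * (c^2*((1/ε-1/G)*(1/ε))) := by ring
      _ ≤ (2*γ*L*G^3*(d:ℝ)/T) * ((4+c^2)*(1/ε^2-1/G^2)) := h6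
      _ = 2*(4+c^2)*γ*L*G^3*(d:ℝ)*(1/ε^2-1/G^2)/T := by ring
  have hB6 : 4*γ^2*L^2*c^2*(d:ℝ)*G^3/ε^3
      ≤ 6*γ^2*L^2*β₁^2*(d:ℝ)*G^3/((1-β₁)^2*ε^3) := by
    have hZ : (0:ℝ) ≤ γ^2*L^2*β₁^2*(d:ℝ)*G^3/((1-β₁)^2*ε^3) := by positivity
    have hLHSe : 4*γ^2*L^2*c^2*(d:ℝ)*G^3/ε^3
        = 4*(γ^2*L^2*β₁^2*(d:ℝ)*G^3/((1-β₁)^2*ε^3)) := by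
      rw [hcdef]
      field_simp
    have hRHSe : 6*γ^2*L^2*β₁^2*(d:ℝ)*G^3/((1-β₁)^2*ε^3)
        = 6*(γ^2*L^2*β₁^2*(d:ℝ)*G^3/((1-β₁)^2*ε^3)) := by ring
    rw [hLHSe, hRHSe]
    linarith only [hZ]
  rw [heq] at hgoal2
  linarith only [hgoal2, hB2c, hB3, hB4, hB5, hB6]
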